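/- Let X be a CAT(0) cube complex of finite diameter with respect to d∞. For a halfspace D delimited by hyperplane J define its depth p(D) = max{ d∞(x, N(J)) : x ∈ D }. Call a hyperplane unbalanced if its two halfspaces have different depths, and for an unbalanced J let J⁺ be the deeper halfspace. Then for any two unbalanced hyperplanes J₁, J₂, the halfspaces J₁⁺ and J₂⁺ intersect. -/

import Mathlib

/-- A combinatorial model of (the 1-skeleton of) a CAT(0) cube complex, encoded by its vertex
set `V` together with its set of hyperplanes `H` and the side (halfspace) function `side`:
* every hyperplane has two nonempty sides;
* any two vertices are separated by finitely many hyperplanes;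
* from any vertex `x ≠ y` one can move along an edge (crossing exactly one hyperplane)
  strictly decreasing the set of hyperplanes separating it from `y` (so the graph metric
  equals the number of separating hyperplanes, as in a CAT(0) cube complex). -/
structure CubeCpx where
  V : Type
  H : Type
  side : H → V → Bool
  exists_both : ∀ h : H, (∃ v, side h v = true) ∧ (∃ v, side h v = false)
  sep_finite : ∀ x y : V, {h | side h x ≠ side h y}.Finite
  descent : ∀ x y : V, x ≠ y → ∃ z : V,
      (∃ h, side h x ≠ side h z ∧ ∀ h', side h' x ≠ side h' z → h' = h) ∧
      {h | side h z ≠ side h y} ⊂ {h | side h x ≠ side h y}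

namespace CubeCpx

variable (X : CubeCpx)

/-- The hyperplane `h` separates the vertices `x` and `y`. -/
def Sep (h : X.H) (x y : X.V) : Prop := X.side h x ≠ X.side h y

/-- Two vertices are adjacent (joined by an edge) iff exactly one hyperplane separates them. -/
def AdjV (x y : X.V) : Prop := ∃ h, X.Sep h x y ∧ ∀ h', X.Sep h' x y → h' = h

/-- The combinatorial distance: the number of hyperplanes separating `x` and `y`. -/
noncomputable def dist (x y : X.V) : ℕ := (X.sep_finite x y).toFinset.card

/-- Two hyperplanes are transverse iff they cross: all four quadrants are nonempty. -/
def Transverse (h h' : X.H) : Prop :=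
  h ≠ h' ∧ ∀ b b' : Bool, ∃ v, X.side h v = b ∧ X.side h' v = b'

/-- `v` lies in the carrier `N(h)` of the hyperplane `h`: some edge at `v` crosses `h`. -/
def InCarrier (h : X.H) (v : X.V) : Prop := ∃ w, X.AdjV v w ∧ X.Sep h v w

/-- `d∞(x,y)`: the maximal number of pairwise non-transverse hyperplanes separating `x`
and `y`. -/
noncomputable def dInf (x y : X.V) : ℕ :=
  sSup {n | ∃ S : Finset X.H, S.card = n ∧ (∀ h ∈ S, X.Sep h x y) ∧
    (S : Set X.H).Pairwise fun a b => ¬ X.Transverse a b}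

/-- `X` contains no infinite cube: there is no vertex lying in the carriers of infinitely many
pairwise transverse hyperplanes (such a family would span an infinite cube). -/
def NoInfiniteCube : Prop :=
  ∀ (v : X.V) (T : Set X.H), (∀ h ∈ T, X.InCarrier h v) → T.Pairwise X.Transverse → T.Finite

/-- `d∞`-distance from a vertex to the carrier of a hyperplane. -/
noncomputable def dToCarrier (h : X.H) (x : X.V) : ℕ :=
  sInf {n | ∃ w, X.InCarrier h w ∧ X.dInf x w = n}

/-- The depth of the halfspace of `h` given by side `b`: the maximal `d∞`-distance from one of
its vertices to the carrier `N(h)`. -/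
noncomputable def depth (h : X.H) (b : Bool) : ℕ :=
  sSup {n | ∃ v, X.side h v = b ∧ X.dToCarrier h v = n}

end CubeCpx

namespace CubeCpx

variable (X : CubeCpx)

lemma dist_lt_of_ssubset {x y z : X.V}
    (hss : {h | X.side h z ≠ X.side h y} ⊂ {h | X.side h x ≠ X.side h y}) :
    X.dist z y < X.dist x y := by
  unfold dist
  exact Finset.card_lt_card (by rwa [Set.Finite.toFinset_ssubset_toFinset])

/-- Crossing lemma: if `h` separates `x` and `y`, there is a carrier vertex of `h`
agreeing with `x` on every hyperplane not separating `x` from `y`. -/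
lemma cross : ∀ (n : ℕ) (x y : X.V) (h : X.H), X.dist x y ≤ n → X.Sep h x y →
    ∃ u, X.InCarrier h u ∧ ∀ s, ¬ X.Sep s x y → X.side s u = X.side s x := by
  intro n
  induction n with
  | zero =>
    intro x y h hle hsep
    exfalso
    have hmem : h ∈ (X.sep_finite x y).toFinset := by
      simpa [Sep] using hsep
    have : 0 < X.dist x y := Finset.card_pos.2 ⟨h, hmem⟩
    omega
  | succ n ih =>
    intro x y h hle hsep
    have hxy : x ≠ y := fun he => hsep (by rw [he])
    obtain ⟨z, ⟨K, hK1, hK2⟩, hss⟩ := X.descent x y hxy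
    by_cases hKh : K = h
    · refine ⟨x, ⟨z, ⟨K, hK1, hK2⟩, ?_⟩, fun s _ => rfl⟩
      rw [hKh] at hK1; exact hK1
    · -- K ∈ sep(x,y)
      have hKxy : X.Sep K x y := by
        by_contra hn
        have hKe : X.side K x = X.side K y := not_not.mp hn
        have hKzy : X.Sep K z y := by
          intro he
          exact hK1 (by rw [hKe, ← he])
        exact hn (hss.1 hKzy)
      have hhz : ¬ X.Sep h x z := fun hc => hKh ((hK2 h hc).symm ▸ rfl)
      have hhzv : X.side h z = X.side h x := (not_not.mp (fun c => hhz (fun e => c e.symm)))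
      have hsep' : X.Sep h z y := by
        intro he
        exact hsep (by rw [← hhzv]; exact he)
      have hdlt : X.dist z y ≤ n := by
        have := X.dist_lt_of_ssubset hss
        omega
      obtain ⟨u, hu, hagree⟩ := ih z y h hdlt hsep'
      refine ⟨u, hu, fun s hs => ?_⟩
      have hsK : s ≠ K := fun he => hs (he ▸ hKxy)
      have hszy : ¬ X.Sep s z y := fun hc => hs (hss.1 hc)
      have h1 : X.side s u = X.side s z := hagree s hszy
      have h2 : X.side s z = X.side s x := by
        by_contra hc
        exact hsK (hK2 s (fun e => hc e.symm))
      rw [h1, h2]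

lemma exists_side (h : X.H) (b : Bool) : ∃ v, X.side h v = b := by
  cases b
  · exact (X.exists_both h).2
  · exact (X.exists_both h).1

lemma carrier_nonempty (h : X.H) : ∃ u, X.InCarrier h u := by
  obtain ⟨v, hv⟩ := X.exists_side h true
  obtain ⟨v', hv'⟩ := X.exists_side h false
  have hsep : X.Sep h v v' := by rw [Sep, hv, hv']; simp
  obtain ⟨u, hu, -⟩ := X.cross (X.dist v v') v v' h le_rfl hsep
  exact ⟨u, hu⟩

lemma dInf_bddAbove (x y : X.V) :
    BddAbove {n | ∃ S : Finset X.H, S.card = n ∧ (∀ h ∈ S, X.Sep h x y) ∧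
      (S : Set X.H).Pairwise fun a b => ¬ X.Transverse a b} := by
  refine ⟨(X.sep_finite x y).toFinset.card, ?_⟩
  rintro n ⟨S, rfl, hS, -⟩
  exact Finset.card_le_card (fun h hh => (Set.Finite.mem_toFinset _).2 (hS h hh))

lemma dInf_nonempty (x y : X.V) :
    Set.Nonempty {n | ∃ S : Finset X.H, S.card = n ∧ (∀ h ∈ S, X.Sep h x y) ∧
      (S : Set X.H).Pairwise fun a b => ¬ X.Transverse a b} :=
  ⟨0, ∅, by simp⟩

lemma dInf_spec (x y : X.V) :
    ∃ S : Finset X.H, S.card = X.dInf x y ∧ (∀ h ∈ S, X.Sep h x y) ∧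
      (S : Set X.H).Pairwise fun a b => ¬ X.Transverse a b :=
  Nat.sSup_mem (X.dInf_nonempty x y) (X.dInf_bddAbove x y)

lemma dInf_mono {x u w : X.V} (hsub : ∀ s, X.Sep s x u → X.Sep s x w) :
    X.dInf x u ≤ X.dInf x w := by
  obtain ⟨S, hcard, hS, hpw⟩ := X.dInf_spec x u
  exact le_csSup (X.dInf_bddAbove x w) ⟨S, hcard, fun h hh => hsub h (hS h hh), hpw⟩

lemma dToCarrier_spec (h : X.H) (x : X.V) :
    ∃ w, X.InCarrier h w ∧ X.dInf x w = X.dToCarrier h x := by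
  obtain ⟨u, hu⟩ := X.carrier_nonempty h
  have := Nat.sInf_mem (s := {n | ∃ w, X.InCarrier h w ∧ X.dInf x w = n}) ⟨X.dInf x u, u, hu, rfl⟩
  exact this

lemma dToCarrier_le (h : X.H) {x u : X.V} (hu : X.InCarrier h u) :
    X.dToCarrier h x ≤ X.dInf x u :=
  Nat.sInf_le ⟨u, hu, rfl⟩

lemma depth_bddAbove {N : ℕ} (hbd : ∀ x y : X.V, X.dInf x y ≤ N) (h : X.H) (b : Bool) :
    BddAbove {n | ∃ v, X.side h v = b ∧ X.dToCarrier h v = n} := by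
  refine ⟨N, ?_⟩
  rintro n ⟨v, -, rfl⟩
  obtain ⟨u, hu⟩ := X.carrier_nonempty h
  exact le_trans (X.dToCarrier_le h hu) (hbd v u)

lemma depth_spec {N : ℕ} (hbd : ∀ x y : X.V, X.dInf x y ≤ N) (h : X.H) (b : Bool) :
    ∃ v, X.side h v = b ∧ X.dToCarrier h v = X.depth h b := by
  obtain ⟨v0, hv0⟩ := X.exists_side h b
  have hne : Set.Nonempty {n | ∃ v, X.side h v = b ∧ X.dToCarrier h v = n} :=
    ⟨X.dToCarrier h v0, v0, hv0, rfl⟩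
  exact Nat.sSup_mem hne (X.depth_bddAbove hbd h b)

lemma le_depth {N : ℕ} (hbd : ∀ x y : X.V, X.dInf x y ≤ N) {h : X.H} {v : X.V} {b : Bool}
    (hv : X.side h v = b) : X.dToCarrier h v ≤ X.depth h b :=
  le_csSup (X.depth_bddAbove hbd h b) ⟨v, hv, rfl⟩

/-- Main auxiliary step: disjoint deep halfspaces force a strict depth inequality. -/
lemma depth_lt_depth {N : ℕ} (hbd : ∀ x y : X.V, X.dInf x y ≤ N)
    (h₁ h₂ : X.H) (b₁ b₂ : Bool) (hne : h₁ ≠ h₂)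
    (hdisj : ∀ v, X.side h₁ v = b₁ → X.side h₂ v ≠ b₂)
    (h2unb : X.depth h₂ (!b₂) < X.depth h₂ b₂) :
    X.depth h₁ b₁ < X.depth h₂ b₂ := by
  -- every carrier vertex of h₂ lies on the `!b₁` side of h₁
  have hSEP : ∀ u, X.InCarrier h₂ u → X.side h₁ u ≠ b₁ := by
    rintro u ⟨u', ⟨k, hk, huni⟩, hsep2⟩
    have hk2 : h₂ = k := huni h₂ hsep2
    have h1same : X.side h₁ u = X.side h₁ u' := by
      by_contra hc
      exact hne ((huni h₁ hc) ▸ hk2.symm ▸ rfl)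
    by_cases hub : X.side h₂ u = b₂
    · intro hb1
      exact hdisj u hb1 hub
    · have hub' : X.side h₂ u' = b₂ := by
        rw [Sep] at hsep2
        cases hbv : X.side h₂ u <;> cases hbv' : X.side h₂ u' <;> cases b₂ <;> simp_all
      intro hb1
      exact hdisj u' (h1same ▸ hb1) hub'
  -- deepest vertex on the b₁ side
  obtain ⟨x, hx, hxd⟩ := X.depth_spec hbd h₁ b₁
  -- carrier vertex of h₂ realizing dToCarrier h₂ x
  obtain ⟨w, hw, hwd⟩ := X.dToCarrier_spec h₂ x
  have hsep1 : X.Sep h₁ x w := by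
    have := hSEP w hw
    rw [Sep, hx]
    intro he
    exact this he.symm
  obtain ⟨u, hu, hagree⟩ := X.cross (X.dist x w) x w h₁ le_rfl hsep1
  have step1 : X.dToCarrier h₁ x ≤ X.dInf x u := X.dToCarrier_le h₁ hu
  have step2 : X.dInf x u ≤ X.dInf x w := by
    refine X.dInf_mono (fun s hs => ?_)
    by_contra hns
    exact hs (hagree s hns).symm
  have hxside2 : X.side h₂ x = !b₂ := by
    have := hdisj x hx
    cases hbv : X.side h₂ x <;> cases b₂ <;> simp_all
  have step3 : X.dInf x w ≤ X.depth h₂ (!b₂) := by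
    rw [hwd]
    exact X.le_depth hbd hxside2
  calc X.depth h₁ b₁ = X.dToCarrier h₁ x := hxd.symm
    _ ≤ X.dInf x u := step1
    _ ≤ X.dInf x w := step2
    _ ≤ X.depth h₂ (!b₂) := step3
    _ < X.depth h₂ b₂ := h2unb

end CubeCpx

/-- Let `X` be a CAT(0) cube complex of finite diameter with respect to `d∞`.
If `h₁`, `h₂` are unbalanced hyperplanes (each with a strictly deeper side `b₁`, `b₂`),
then the deeper halfspaces `h₁⁺` and `h₂⁺` intersect. -/
theorem deeper_halfspaces_intersect (X : CubeCpx)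
    (hbd : ∃ N : ℕ, ∀ x y : X.V, X.dInf x y ≤ N)
    (h₁ h₂ : X.H) (b₁ b₂ : Bool)
    (h1unb : X.depth h₁ (!b₁) < X.depth h₁ b₁)
    (h2unb : X.depth h₂ (!b₂) < X.depth h₂ b₂) :
    ∃ v : X.V, X.side h₁ v = b₁ ∧ X.side h₂ v = b₂ := by
  by_contra hno
  push_neg at hno
  by_cases hne : h₁ = h₂
  · subst hne
    by_cases hb : b₁ = b₂
    · subst hb
      obtain ⟨v, hv⟩ := X.exists_side h₁ b₁
      exact hno v hv hv
    · have hb2 : b₂ = !b₁ := by cases b₁ <;> cases b₂ <;> simp_all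
      rw [hb2, Bool.not_not] at h2unb
      exact absurd h2unb (lt_asymm h1unb)
  · obtain ⟨N, hN⟩ := hbd
    have A := X.depth_lt_depth hN h₁ h₂ b₁ b₂ hne hno h2unb
    have B := X.depth_lt_depth hN h₂ h₁ b₂ b₁ (Ne.symm hne)
      (fun v hv2 hv1 => hno v hv1 hv2) h1unb
    exact absurd A (lt_asymm B)
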